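/- (Theorem 1, bound on the loss) Let K = 2n+1 be odd and θ ∈ (0,1/2], and set θ̂ = θ/(1-θ). Then the binomial tail satisfies T(K, n+1, θ) = ∑_{i=n+1}^{K} C(K,i) θ^i (1-θ)^{K-i} ≤ 1/2, and consequently the performance loss L^K(θ) = T(K, n+1, θ) - θ̂^K/(1 + θ̂^K) is strictly less than 1/2. -/

import Mathlib

/-- Theorem 1, bound on the loss: for odd `K = 2n+1`, `θ ∈ (0,1/2]` and
`θ̂ = θ/(1-θ)`, the binomial tail `T(K, n+1, θ)` is at most `1/2`, and the performance
loss `L^K(θ) = T(K, n+1, θ) - θ̂^K/(1+θ̂^K)` is strictly less than `1/2`. -/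
theorem loss_lt_half (n : ℕ) (θ : ℝ) (hθ : θ ∈ Set.Ioc (0:ℝ) (1/2)) :
    (∑ i ∈ Finset.Icc (n + 1) (2 * n + 1),
        ((2 * n + 1).choose i : ℝ) * θ ^ i * (1 - θ) ^ (2 * n + 1 - i)) ≤ 1 / 2 ∧
    (∑ i ∈ Finset.Icc (n + 1) (2 * n + 1),
        ((2 * n + 1).choose i : ℝ) * θ ^ i * (1 - θ) ^ (2 * n + 1 - i)) -
      (θ / (1 - θ)) ^ (2 * n + 1) / (1 + (θ / (1 - θ)) ^ (2 * n + 1)) < 1 / 2 := by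
  obtain ⟨hθ0, hθ2⟩ := hθ
  have h1θ : (0:ℝ) < 1 - θ := by linarith
  have hθle : θ ≤ 1 - θ := by linarith
  set f : ℕ → ℝ := fun i =>
    ((2 * n + 1).choose i : ℝ) * θ ^ i * (1 - θ) ^ (2 * n + 1 - i) with hf
  -- full sum = 1
  have hfull : (∑ i ∈ Finset.range (2 * n + 2), f i) = 1 := by
    have h := add_pow θ (1 - θ) (2 * n + 1)
    have he : θ + (1 - θ) = 1 := by ring
    rw [he, one_pow] at h
    rw [show (2 * n + 2) = (2 * n + 1) + 1 by ring, h]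
    apply Finset.sum_congr rfl
    intro i _
    simp only [hf]
    ring
  -- split the full sum
  have hsplit : (∑ i ∈ Finset.range (n + 1), f i)
      + (∑ i ∈ Finset.Icc (n + 1) (2 * n + 1), f i) = 1 := by
    rw [← hfull]
    have h1 : Finset.Icc (n + 1) (2 * n + 1) = Finset.Ico (n + 1) (2 * n + 2) := by
      exact (Finset.Ico_add_one_right_eq_Icc _ _).symm
    simp only [h1, Finset.range_eq_Ico]
    exact Finset.sum_Ico_consecutive f (by omega) (by omega)
  -- tail ≤ head
  have hle : (∑ i ∈ Finset.Icc (n + 1) (2 * n + 1), f i)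
      ≤ (∑ i ∈ Finset.range (n + 1), f i) := by
    rw [show Finset.Icc (n + 1) (2 * n + 1) = Finset.Ico (n + 1) (2 * n + 2) by
      exact (Finset.Ico_add_one_right_eq_Icc _ _).symm, Finset.sum_Ico_eq_sum_range]
    have hrefl : (∑ j ∈ Finset.range (n + 1), f (n + 1 - 1 - j))
        = ∑ j ∈ Finset.range (n + 1), f j := Finset.sum_range_reflect f (n + 1)
    rw [show (2 * n + 2 - (n + 1)) = n + 1 by omega, ← hrefl]
    apply Finset.sum_le_sum
    intro i hi
    have hi' : i ≤ n := by simpa [Nat.lt_succ_iff] using hi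
    have hc : (2 * n + 1).choose (n + 1 + i) = (2 * n + 1).choose (n - i) := by
      rw [show n - i = 2 * n + 1 - (n + 1 + i) by omega]
      exact (Nat.choose_symm (by omega)).symm
    have e1 : 2 * n + 1 - (n + 1 + i) = n - i := by omega
    have e2 : 2 * n + 1 - (n - i) = n + 1 + i := by omega
    have e4 : n + 1 - 1 - i = n - i := by omega
    simp only [hf, e1, e2, e4, hc]
    have hpθ : θ ^ (n + 1 + i) = θ ^ (n - i) * θ ^ (2 * i + 1) := by
      rw [← pow_add]; congr 1; omega
    have hp1 : (1 - θ) ^ (n + 1 + i) = (1 - θ) ^ (n - i) * (1 - θ) ^ (2 * i + 1) := by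
      rw [← pow_add]; congr 1; omega
    rw [hpθ, hp1]
    have hpow : θ ^ (2 * i + 1) ≤ (1 - θ) ^ (2 * i + 1) :=
      pow_le_pow_left₀ hθ0.le hθle _
    have hnn : (0:ℝ) ≤ ((2 * n + 1).choose (n - i) : ℝ) * θ ^ (n - i) * (1 - θ) ^ (n - i) :=
      by positivity
    calc ((2 * n + 1).choose (n - i) : ℝ) * (θ ^ (n - i) * θ ^ (2 * i + 1)) * (1 - θ) ^ (n - i)
        = (((2 * n + 1).choose (n - i) : ℝ) * θ ^ (n - i) * (1 - θ) ^ (n - i)) * θ ^ (2 * i + 1) := by ring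
      _ ≤ (((2 * n + 1).choose (n - i) : ℝ) * θ ^ (n - i) * (1 - θ) ^ (n - i)) * (1 - θ) ^ (2 * i + 1) :=
          mul_le_mul_of_nonneg_left hpow hnn
      _ = ((2 * n + 1).choose (n - i) : ℝ) * θ ^ (n - i) * ((1 - θ) ^ (n - i) * (1 - θ) ^ (2 * i + 1)) := by ring
  have hT : (∑ i ∈ Finset.Icc (n + 1) (2 * n + 1), f i) ≤ 1 / 2 := by linarith
  refine ⟨hT, ?_⟩
  have hr : 0 < (θ / (1 - θ)) ^ (2 * n + 1) / (1 + (θ / (1 - θ)) ^ (2 * n + 1)) := by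
    have h1 : 0 < (θ / (1 - θ)) ^ (2 * n + 1) := by positivity
    positivity
  linarith
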